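/- Let q < p < 0 with q ≤ −2. For every compact set K ⊆ ℝ² containing more than one point, cap_q(K)/cap_p(K) ≤ 2^{1/q − 1/p}, and equality holds when K is a two-point set. Thus the two-point set maximizes the capacity ratio among compact planar sets with more than one point. -/

import Mathlib

open MeasureTheory Metric Set ENNReal Filter

noncomputable section

namespace Riesz

variable {E : Type*} [MeasurableSpace E] [PseudoMetricSpace E]

/-- Borel probability measures supported on `K` (i.e. giving full mass to `K`). -/
def probOn (K : Set E) : Set (Measure E) :=
  {μ | IsProbabilityMeasure μ ∧ μ Kᶜ = 0}

/-- The Riesz `p`-energy `∬ |x-y|^{-p} dμ dμ` of a measure `μ`, valued in `ℝ≥0∞`.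
(The kernel `(dist x y)^{-p}`, computed in `ℝ≥0∞`, is `∞` on the diagonal when `p > 0`
and `0` on the diagonal when `p < 0`.) -/
def energyOf (p : ℝ) (μ : Measure E) : ℝ≥0∞ :=
  ∫⁻ z : E × E, (ENNReal.ofReal (dist z.1 z.2)) ^ (-p) ∂(μ.prod μ)

/-- The Riesz `p`-energy of a set `K`, for `p ≠ 0`: a supremum over probability measures
on `K` when `p < 0`, an infimum when `p > 0`.  (For `K = ∅` this gives `0` when `p < 0`
and `∞` when `p > 0`.) -/
def energy (p : ℝ) (K : Set E) : ℝ≥0∞ :=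
  if p < 0 then ⨆ μ ∈ probOn K, energyOf p μ
  else ⨅ μ ∈ probOn K, energyOf p μ

/-- The logarithmic energy `∬ log (1/|x-y|) dμ dμ` of a measure, as an extended real:
the positive part (with value `∞` on the diagonal) minus the negative part. -/
def logEnergyOf (μ : Measure E) : EReal :=
  ((∫⁻ z : E × E, (if dist z.1 z.2 = 0 then ⊤ else
      ENNReal.ofReal (Real.log (1 / dist z.1 z.2))) ∂(μ.prod μ) : ℝ≥0∞) : EReal)
  - ((∫⁻ z : E × E, ENNReal.ofReal (Real.log (dist z.1 z.2)) ∂(μ.prod μ) : ℝ≥0∞) : EReal)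

/-- The logarithmic energy of a set `K`: infimum over probability measures on `K`. -/
def logEnergy (K : Set E) : EReal :=
  ⨅ μ ∈ probOn K, logEnergyOf μ

/-- The Riesz `p`-capacity of a set: `V_p(K)^{-1/p}` for `p ≠ 0`, and the logarithmic
capacity `exp(-V_log(K))` for `p = 0`. -/
def cap (p : ℝ) (K : Set E) : ℝ :=
  if p = 0 then
    (if logEnergy K = ⊤ then 0 else Real.exp (-(logEnergy K).toReal))
  else ((energy p K).toReal) ^ (-1 / p)

/-- `μ` is a `p`-equilibrium measure of `K`: a probability measure on `K` whose
`p`-energy attains the optimal `p`-energy of `K`. -/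
def IsEquilibrium (p : ℝ) (K : Set E) (μ : Measure E) : Prop :=
  μ ∈ probOn K ∧ energyOf p μ = energy p K

/-- A set `Z` has inner `p`-capacity zero: every compact subset has `p`-capacity zero. -/
def InnerCapZero (p : ℝ) (Z : Set E) : Prop :=
  ∀ Z' ⊆ Z, IsCompact Z' → cap p Z' = 0

end Riesz

end

set_option linter.unusedSectionVars false
set_option maxHeartbeats 1000000

namespace RieszAux

open Riesz

variable {E : Type*} [MeasurableSpace E] [MetricSpace E] [BorelSpace E]
  [SecondCountableTopology E]

lemma ker_meas (s : ℝ) :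
    Measurable (fun z : E × E => (ENNReal.ofReal (dist z.1 z.2)) ^ s) :=
  (ENNReal.continuous_rpow_const.measurable).comp measurable_dist.ennreal_ofReal

lemma energyOf_rep (s : ℝ) (hs : s < 0) {x y : E} {μ : Measure E} [IsFiniteMeasure μ]
    {a b : ℝ≥0∞} (hrep : μ = a • Measure.dirac x + b • Measure.dirac y) :
    energyOf s μ = (2 * (a * b)) * (ENNReal.ofReal (dist x y)) ^ (-s) := by
  rw [energyOf, lintegral_prod _ (ker_meas (-s)).aemeasurable]
  conv_lhs => rw [hrep]
  simp only [lintegral_add_measure, lintegral_smul_measure, lintegral_dirac]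
  simp only [dist_self, dist_comm y x, ENNReal.ofReal_zero,
    ENNReal.zero_rpow_of_pos (by linarith : (0:ℝ) < -s)]
  ring

lemma measure_pair_rep {x y : E} (hxy : x ≠ y) {μ : Measure E}
    (hμ : μ ∈ probOn ({x, y} : Set E)) :
    μ = μ {x} • Measure.dirac x + μ {y} • Measure.dirac y := by
  have hxyc : μ ({x, y}ᶜ : Set E) = 0 := hμ.2
  ext s hs
  have h1 : μ s = μ (s ∩ {x, y}) := by
    have h0 : μ (s \ {x, y}) = 0 := measure_mono_null (diff_subset_compl s _) hxyc
    rw [← measure_inter_add_diff s (by measurability : MeasurableSet ({x,y} : Set E)), h0,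
      add_zero]
  have h2 : s ∩ {x, y} = (s ∩ {x}) ∪ (s ∩ {y}) := by
    rw [← inter_union_distrib_left]; rfl
  have hd : Disjoint (s ∩ {x}) (s ∩ {y}) := by
    refine Disjoint.inter_left' _ (Disjoint.inter_right' _ ?_)
    simpa [Set.disjoint_singleton] using hxy
  have key : ∀ z : E, μ (s ∩ {z}) = s.indicator 1 z * μ {z} := by
    intro z; by_cases hz : z ∈ s
    · rw [Set.inter_eq_self_of_subset_right (Set.singleton_subset_iff.mpr hz)]
      simp [Set.indicator_of_mem hz]
    · rw [Set.inter_singleton_eq_empty.mpr hz]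
      simp [Set.indicator_of_notMem hz]
  rw [h1, h2, measure_union hd (hs.inter (measurableSet_singleton y)), key x, key y]
  simp only [Measure.coe_add, Measure.coe_smul, Pi.add_apply, Pi.smul_apply, smul_eq_mul,
    Measure.dirac_apply' _ hs]
  ring

lemma ae_mem_prod {K : Set E} (hKm : MeasurableSet K) {μ : Measure E}
    (hμ : μ ∈ probOn K) :
    ∀ᵐ z : E × E ∂(μ.prod μ), z.1 ∈ K ∧ z.2 ∈ K := by
  haveI := hμ.1
  have hsub : {z : E × E | ¬(z.1 ∈ K ∧ z.2 ∈ K)} ⊆ (Kᶜ ×ˢ univ) ∪ (univ ×ˢ Kᶜ) := by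
    intro z hz
    rcases not_and_or.mp hz with h | h
    · exact Or.inl ⟨h, trivial⟩
    · exact Or.inr ⟨trivial, h⟩
  refine measure_mono_null hsub (measure_union_null ?_ ?_) <;>
    rw [Measure.prod_prod] <;> simp [hμ.2]

lemma energyOf_le_const (s : ℝ) (hs : s < 0) {K : Set E} (hKm : MeasurableSet K)
    {d : ℝ} (hd : ∀ z ∈ K, ∀ w ∈ K, dist z w ≤ d) {μ : Measure E} (hμ : μ ∈ probOn K) :
    energyOf s μ ≤ (ENNReal.ofReal d) ^ (-s) := by
  haveI := hμ.1
  rw [energyOf]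
  calc ∫⁻ z : E × E, (ENNReal.ofReal (dist z.1 z.2)) ^ (-s) ∂(μ.prod μ)
      ≤ ∫⁻ _ : E × E, (ENNReal.ofReal d) ^ (-s) ∂(μ.prod μ) := by
        refine lintegral_mono_ae ?_
        filter_upwards [ae_mem_prod hKm hμ] with z hz
        exact ENNReal.rpow_le_rpow (ENNReal.ofReal_le_ofReal (hd _ hz.1 _ hz.2))
          (by linarith)
    _ = (ENNReal.ofReal d) ^ (-s) := by
        rw [lintegral_const, measure_univ, mul_one]

lemma energyOf_cmp (p q : ℝ) (hqp : q < p) (hp : p < 0) {K : Set E} (hKm : MeasurableSet K)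
    {d : ℝ} (hd : ∀ z ∈ K, ∀ w ∈ K, dist z w ≤ d) {μ : Measure E} (hμ : μ ∈ probOn K) :
    energyOf q μ ≤ (ENNReal.ofReal d) ^ (p - q) * energyOf p μ := by
  haveI := hμ.1
  rw [energyOf, energyOf, ← lintegral_const_mul' _ _
    (ENNReal.rpow_ne_top_of_nonneg (by linarith) ENNReal.ofReal_ne_top)]
  refine lintegral_mono_ae ?_
  filter_upwards [ae_mem_prod hKm hμ] with z hz
  rcases eq_or_lt_of_le (dist_nonneg (x := z.1) (y := z.2)) with h0 | h0
  · rw [← h0, ENNReal.ofReal_zero, ENNReal.zero_rpow_of_pos (by linarith)]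
    exact zero_le
  · have hne0 : ENNReal.ofReal (dist z.1 z.2) ≠ 0 := by
      rw [Ne, ENNReal.ofReal_eq_zero]; exact not_le.mpr h0
    have hneT : ENNReal.ofReal (dist z.1 z.2) ≠ ⊤ := ENNReal.ofReal_ne_top
    have hexp : (-q : ℝ) = (p - q) + (-p) := by ring
    rw [hexp, ENNReal.rpow_add _ _ hne0 hneT]
    exact mul_le_mul_left
      (ENNReal.rpow_le_rpow (ENNReal.ofReal_le_ofReal (hd _ hz.1 _ hz.2)) (by linarith)) _

/-- The half-half two-point measure. -/
noncomputable def pairMeasure (x y : E) : Measure E :=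
  (2⁻¹ : ℝ≥0∞) • Measure.dirac x + (2⁻¹ : ℝ≥0∞) • Measure.dirac y

lemma pairMeasure_mem {K : Set E} (hKm : MeasurableSet K) {x y : E} (hx : x ∈ K)
    (hy : y ∈ K) : pairMeasure x y ∈ probOn K := by
  constructor
  · constructor
    simp only [pairMeasure, Measure.coe_add, Measure.coe_smul, Pi.add_apply, Pi.smul_apply,
      smul_eq_mul, measure_univ, mul_one]
    exact ENNReal.inv_two_add_inv_two
  · simp only [pairMeasure, Measure.coe_add, Measure.coe_smul, Pi.add_apply, Pi.smul_apply,
      smul_eq_mul, Measure.dirac_apply' _ hKm.compl]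
    simp [Set.indicator_of_notMem (by simpa using hx : x ∉ Kᶜ),
      Set.indicator_of_notMem (by simpa using hy : y ∉ Kᶜ)]

lemma energyOf_pairMeasure (s : ℝ) (hs : s < 0) (x y : E) :
    energyOf s (pairMeasure x y) = 2⁻¹ * (ENNReal.ofReal (dist x y)) ^ (-s) := by
  haveI : IsProbabilityMeasure (pairMeasure x y) :=
    (pairMeasure_mem MeasurableSet.univ (mem_univ x) (mem_univ y)).1
  rw [energyOf_rep s hs (rfl : pairMeasure x y = _)]
  congr 1
  rw [← mul_assoc, ENNReal.mul_inv_cancel two_ne_zero ENNReal.ofNat_ne_top, one_mul]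

lemma energy_lb (s : ℝ) (hs : s < 0) {K : Set E} (hKm : MeasurableSet K) {x y : E}
    (hx : x ∈ K) (hy : y ∈ K) :
    2⁻¹ * (ENNReal.ofReal (dist x y)) ^ (-s) ≤ energy s K := by
  rw [energy, if_pos hs]
  rw [← energyOf_pairMeasure s hs x y]
  exact le_iSup₂ (f := fun (μ : Measure E) (_ : μ ∈ probOn K) => energyOf s μ)
    (pairMeasure x y) (pairMeasure_mem hKm hx hy)

lemma energy_pair (s : ℝ) (hs : s < 0) {x y : E} (hxy : x ≠ y) :
    energy s ({x, y} : Set E) = 2⁻¹ * (ENNReal.ofReal (dist x y)) ^ (-s) := by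
  have hm : MeasurableSet ({x, y} : Set E) := by measurability
  refine le_antisymm ?_ (energy_lb s hs hm (by simp) (by simp))
  rw [energy, if_pos hs]
  refine iSup₂_le fun μ hμ => ?_
  haveI := hμ.1
  rw [energyOf_rep s hs (measure_pair_rep hxy hμ)]
  refine mul_le_mul_left ?_ _
  -- `2 * (μ {x} * μ {y}) ≤ 2⁻¹` given `μ {x} + μ {y} = 1`
  have hsum : μ {x} + μ {y} = 1 := by
    have hu : ({x} : Set E) ∪ {y} = {x, y} := by rw [Set.singleton_union]
    have h1 : μ ({x, y} : Set E) = 1 := by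
      have := measure_add_measure_compl (μ := μ) hm
      rw [hμ.2, add_zero, measure_univ] at this
      exact this
    rw [← h1, ← hu, measure_union (Set.disjoint_singleton.mpr hxy)
      (measurableSet_singleton y)]
  have hax : μ {x} ≠ ⊤ := measure_ne_top μ _
  have hay : μ {y} ≠ ⊤ := measure_ne_top μ _
  have htr : (μ {x}).toReal + (μ {y}).toReal = 1 := by
    rw [← ENNReal.toReal_add hax hay, hsum, ENNReal.toReal_one]
  have hr : 2 * ((μ {x}).toReal * (μ {y}).toReal) ≤ 2⁻¹ := by
    nlinarith [sq_nonneg ((μ {x}).toReal - (μ {y}).toReal)]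
  calc 2 * (μ {x} * μ {y})
      = ENNReal.ofReal (2 * ((μ {x}).toReal * (μ {y}).toReal)) := by
        rw [ENNReal.ofReal_mul (by norm_num), ← ENNReal.toReal_mul,
          ENNReal.ofReal_toReal (ENNReal.mul_ne_top hax hay)]
        norm_num
    _ ≤ ENNReal.ofReal 2⁻¹ := ENNReal.ofReal_le_ofReal hr
    _ = 2⁻¹ := by
        rw [ENNReal.ofReal_inv_of_pos (by norm_num)]
        norm_num

lemma real_main {p q d Vp Vq : ℝ} (hqp : q < p) (hp : p < 0) (hd : 0 < d)
    (hVp : 2⁻¹ * d ^ (-p) ≤ Vp) (hVq0 : 0 ≤ Vq) (hVq : Vq ≤ d ^ (p - q) * Vp) :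
    Vq ^ (-1 / q) ≤ 2 ^ (1 / q - 1 / p) * Vp ^ (-1 / p) := by
  have hq : q < 0 := by linarith
  have hp0 : p ≠ 0 := ne_of_lt hp
  have hq0 : q ≠ 0 := ne_of_lt hq
  have hVp0 : 0 < Vp := lt_of_lt_of_le (by positivity) hVp
  have h1 : 0 < -1 / q := by
    rw [_root_.div_pos_iff]; exact Or.inr ⟨by linarith, hq⟩
  have he : 1 / p - 1 / q ≤ 0 := by
    have h : 1 / p - 1 / q = (q - p) / (p * q) := by field_simp
    rw [h]
    exact (div_neg_of_neg_of_pos (by linarith) (mul_pos_of_neg_of_neg hp hq)).le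
  have h2inv : (2⁻¹ : ℝ) ^ (1 / p - 1 / q) = 2 ^ (1 / q - 1 / p) := by
    rw [Real.inv_rpow (by norm_num), ← Real.rpow_neg (by norm_num)]
    congr 1; ring
  have hAB : d ^ ((p - q) * (-1 / q)) * d ^ ((-p) * (1 / p - 1 / q)) = 1 := by
    rw [← Real.rpow_add hd,
      show (p - q) * (-1 / q) + (-p) * (1 / p - 1 / q) = 0 by field_simp; ring,
      Real.rpow_zero]
  have hsplit : Vp ^ (-1 / q) = Vp ^ (1 / p - 1 / q) * Vp ^ (-1 / p) := by
    rw [← Real.rpow_add hVp0]; congr 1; ring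
  calc Vq ^ (-1 / q)
      ≤ (d ^ (p - q) * Vp) ^ (-1 / q) := Real.rpow_le_rpow hVq0 hVq h1.le
    _ = d ^ ((p - q) * (-1 / q)) * (Vp ^ (1 / p - 1 / q) * Vp ^ (-1 / p)) := by
        rw [Real.mul_rpow (by positivity) hVp0.le, Real.rpow_mul hd.le, hsplit]
    _ ≤ d ^ ((p - q) * (-1 / q)) * ((2⁻¹ * d ^ (-p)) ^ (1 / p - 1 / q) * Vp ^ (-1 / p)) := by
        have hle : Vp ^ (1 / p - 1 / q) ≤ (2⁻¹ * d ^ (-p)) ^ (1 / p - 1 / q) :=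
          Real.rpow_le_rpow_of_nonpos (by positivity) hVp he
        have hd1 : (0:ℝ) ≤ d ^ ((p - q) * (-1 / q)) := (Real.rpow_pos_of_pos hd _).le
        have hv1 : (0:ℝ) ≤ Vp ^ (-1 / p) := (Real.rpow_pos_of_pos hVp0 _).le
        exact mul_le_mul_of_nonneg_left (mul_le_mul_of_nonneg_right hle hv1) hd1
    _ = (d ^ ((p - q) * (-1 / q)) * d ^ ((-p) * (1 / p - 1 / q))) *
          ((2⁻¹ : ℝ) ^ (1 / p - 1 / q) * Vp ^ (-1 / p)) := by
        rw [Real.mul_rpow (by norm_num) (Real.rpow_pos_of_pos hd _).le,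
          ← Real.rpow_mul hd.le]
        ring
    _ = 2 ^ (1 / q - 1 / p) * Vp ^ (-1 / p) := by rw [hAB, one_mul, h2inv]

lemma cap_pair (s : ℝ) (hs : s < 0) {x y : E} (hxy : x ≠ y) :
    cap s ({x, y} : Set E) = 2 ^ (1 / s) * dist x y := by
  have hs0 : s ≠ 0 := ne_of_lt hs
  have hd : 0 < dist x y := dist_pos.mpr hxy
  rw [cap, if_neg hs0, energy_pair s hs hxy]
  have hT : (2⁻¹ * (ENNReal.ofReal (dist x y)) ^ (-s)).toReal
      = 2⁻¹ * (dist x y) ^ (-s) := by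
    rw [ENNReal.toReal_mul, ← ENNReal.toReal_rpow, ENNReal.toReal_ofReal hd.le]
    norm_num
  rw [hT, Real.mul_rpow (by norm_num) (Real.rpow_pos_of_pos hd _).le,
    ← Real.rpow_mul hd.le, show (-s) * (-1 / s) = 1 by field_simp, Real.rpow_one]
  congr 1
  rw [Real.inv_rpow (by norm_num), ← Real.rpow_neg (by norm_num)]
  congr 1; ring

end RieszAux

/-- For `q < p < 0` with `q ≤ -2`, among compact planar sets with more than one point
the two-point set maximizes `cap_q/cap_p`, with maximal value `2^(1/q-1/p)`. -/
theorem statement9 (p q : ℝ) (hqp : q < p) (hp : p < 0) (hq : q ≤ -2)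
    (K : Set (EuclideanSpace ℝ (Fin 2))) (hK : IsCompact K) (hK2 : K.Nontrivial) :
    Riesz.cap q K / Riesz.cap p K ≤ (2 : ℝ) ^ (1 / q - 1 / p) ∧
    ∀ x y : EuclideanSpace ℝ (Fin 2), x ≠ y →
      Riesz.cap q ({x, y} : Set (EuclideanSpace ℝ (Fin 2))) /
        Riesz.cap p ({x, y} : Set (EuclideanSpace ℝ (Fin 2))) =
        (2 : ℝ) ^ (1 / q - 1 / p) := by
  have hq : q < 0 := by linarith
  have hp0 : p ≠ 0 := ne_of_lt hp
  have hq0 : q ≠ 0 := ne_of_lt hq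
  constructor
  · -- the inequality for a general compact `K`
    have hKm : MeasurableSet K := hK.isClosed.measurableSet
    -- points of `K` at maximal mutual distance
    obtain ⟨z, hzK, hzmax⟩ := (hK.prod hK).exists_isMaxOn (hK2.nonempty.prod hK2.nonempty)
      (continuous_dist.continuousOn (s := K ×ˢ K))
    set d : ℝ := dist z.1 z.2 with hd_def
    have hdle : ∀ u ∈ K, ∀ v ∈ K, dist u v ≤ d := by
      intro u hu v hv
      exact isMaxOn_iff.mp hzmax (u, v) (Set.mk_mem_prod hu hv)
    have hd : 0 < d := by
      obtain ⟨u, hu, v, hv, huv⟩ := hK2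
      exact lt_of_lt_of_le (dist_pos.mpr huv) (hdle u hu v hv)
    set c : ℝ≥0∞ := ENNReal.ofReal d with hc_def
    have hc0 : c ≠ 0 := by
      rw [hc_def, Ne, ENNReal.ofReal_eq_zero]; exact not_le.mpr hd
    -- bounds on the energies
    have hEp_lb : 2⁻¹ * c ^ (-p) ≤ Riesz.energy p K :=
      RieszAux.energy_lb p hp hKm hzK.1 hzK.2
    have hEp_ub : Riesz.energy p K ≤ c ^ (-p) := by
      rw [Riesz.energy, if_pos hp]
      exact iSup₂_le fun μ hμ => RieszAux.energyOf_le_const p hp hKm hdle hμ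
    have hEq_ub : Riesz.energy q K ≤ c ^ (p - q) * Riesz.energy p K := by
      rw [Riesz.energy, if_pos hq]
      refine iSup₂_le fun μ hμ => ?_
      refine le_trans (RieszAux.energyOf_cmp p q hqp hp hKm hdle hμ) ?_
      refine mul_le_mul_right ?_ _
      rw [Riesz.energy, if_pos hp]
      exact le_iSup₂ (f := fun (ν : MeasureTheory.Measure (EuclideanSpace ℝ (Fin 2)))
        (_ : ν ∈ Riesz.probOn K) => Riesz.energyOf p ν) μ hμ
    have hcp_ne : c ^ (-p) ≠ ⊤ :=
      ENNReal.rpow_ne_top_of_nonneg (by linarith) ENNReal.ofReal_ne_top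
    have hEp_ne : Riesz.energy p K ≠ ⊤ := ne_top_of_le_ne_top hcp_ne hEp_ub
    have hEq_ne : Riesz.energy q K ≠ ⊤ :=
      ne_top_of_le_ne_top (ENNReal.mul_ne_top
        (ENNReal.rpow_ne_top_of_nonneg (by linarith) ENNReal.ofReal_ne_top) hEp_ne) hEq_ub
    set Vp : ℝ := (Riesz.energy p K).toReal with hVp_def
    set Vq : ℝ := (Riesz.energy q K).toReal with hVq_def
    -- real versions of the bounds
    have hVp_lb : 2⁻¹ * d ^ (-p) ≤ Vp := by
      have h := ENNReal.toReal_mono hEp_ne hEp_lb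
      rwa [ENNReal.toReal_mul, ← ENNReal.toReal_rpow, hc_def, ENNReal.toReal_ofReal hd.le,
        show ((2:ℝ≥0∞)⁻¹).toReal = 2⁻¹ by norm_num] at h
    have hVq_ub : Vq ≤ d ^ (p - q) * Vp := by
      have h := ENNReal.toReal_mono
        (ENNReal.mul_ne_top (ENNReal.rpow_ne_top_of_nonneg (by linarith)
          ENNReal.ofReal_ne_top) hEp_ne) hEq_ub
      rwa [ENNReal.toReal_mul, ← ENNReal.toReal_rpow,
        ENNReal.toReal_ofReal hd.le] at h
    have hVp_pos : 0 < Vp := lt_of_lt_of_le (by positivity) hVp_lb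
    have hmain := RieszAux.real_main hqp hp hd hVp_lb ENNReal.toReal_nonneg hVq_ub
    rw [Riesz.cap, if_neg hq0, Riesz.cap, if_neg hp0, ← hVp_def, ← hVq_def]
    rw [div_le_iff₀ (Real.rpow_pos_of_pos hVp_pos _)]
    exact hmain
  · -- equality for two-point sets
    intro x y hxy
    rw [RieszAux.cap_pair q hq hxy, RieszAux.cap_pair p hp hxy]
    have hd : 0 < dist x y := dist_pos.mpr hxy
    rw [mul_div_mul_right _ _ (ne_of_gt hd), Real.rpow_sub (by norm_num)]
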